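/- Fix β ∈ ℕ with β ≥ 0 and θ > 0, and consider the generalized gamma-type density on ℝ, q_θ(x) = (θ^{β+1/2}/Γ(β+1/2)) x^{2β} e^{−θx²}. Then: (i) ∂_θ log q_θ(x) = (2β+1)/(2θ) − x², and for every x ≠ 0, A_θ(d/dx ∂_θ log q_θ)(x) = −4θ · ∂_θ log q_θ(x); (ii) the function Φ_θ(x) := −x²/(4θ) + (2β+1)/(8θ²) satisfies A_θ(Φ_θ′)(x) = −∂_θ log q_θ(x) for every x ≠ 0 and E_θ[Φ_θ] = 0, i.e. Φ_θ is the Wasserstein score function of the scale parameter θ. -/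

import Mathlib

open MeasureTheory Real

/-- One-dimensional divergence-based Stein operator `A_q f = (q f)′ / q`. -/
noncomputable def stein1 (q f : ℝ → ℝ) (x : ℝ) : ℝ :=
  deriv (fun y => q y * f y) x / q x

/-- Generalized gamma-type density `q_θ(x) = θ^{β+1/2}/Γ(β+1/2) · x^{2β} e^{−θx²}`. -/
noncomputable def ggDens (β : ℕ) (θ x : ℝ) : ℝ :=
  θ ^ ((β : ℝ) + 1 / 2) / Real.Gamma ((β : ℝ) + 1 / 2) * x ^ (2 * β) * Real.exp (-θ * x ^ 2)

lemma moment (θ : ℝ) (hθ : 0 < θ) (n : ℕ) :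
    ∫ x : ℝ, x ^ (2*n) * Real.exp (-θ * x^2)
      = θ ^ (-((n:ℝ) + 1/2)) * Real.Gamma ((n:ℝ) + 1/2) := by
  have h0 : (fun x : ℝ => x^(2*n) * Real.exp (-θ*x^2))
      = fun x : ℝ => |x|^(2*n) * Real.exp (-θ*|x|^2) := by
    funext x; rw [pow_mul, pow_mul, sq_abs]
  have h1 : ∫ x : ℝ, x ^ (2*n) * Real.exp (-θ * x^2)
      = 2 * ∫ x in Set.Ioi (0:ℝ), x ^ (2*n) * Real.exp (-θ * x^2) := by
    conv_lhs => rw [h0]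
    rw [integral_comp_abs (f := fun x => x ^ (2*n) * Real.exp (-θ * x^2))]
  have h2 : ∫ x in Set.Ioi (0:ℝ), x ^ (2*n) * Real.exp (-θ * x^2)
      = ∫ x in Set.Ioi (0:ℝ), x ^ ((2*n : ℕ):ℝ) * Real.exp (-θ * x ^ (2:ℝ)) := by
    refine setIntegral_congr_fun measurableSet_Ioi (fun x hx => ?_)
    rw [Real.rpow_natCast, Real.rpow_two]
  rw [h1, h2, integral_rpow_mul_exp_neg_mul_rpow two_pos
    (lt_of_lt_of_le neg_one_lt_zero (Nat.cast_nonneg _)) hθ]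
  have e1 : (((2*n : ℕ):ℝ) + 1) / 2 = (n:ℝ) + 1/2 := by push_cast; ring
  have e2 : -(((2*n : ℕ):ℝ) + 1) / 2 = -((n:ℝ) + 1/2) := by push_cast; ring
  rw [e1, e2]; ring

lemma integrable_moment (θ : ℝ) (hθ : 0 < θ) (n : ℕ) :
    Integrable (fun x : ℝ => x^(2*n) * Real.exp (-θ*x^2)) := by
  have h := integrable_rpow_mul_exp_neg_mul_sq hθ (s := ((2*n:ℕ):ℝ))
    (lt_of_lt_of_le neg_one_lt_zero (Nat.cast_nonneg _))
  exact h.congr (Filter.Eventually.of_forall fun x => by simp only [Real.rpow_natCast])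

lemma hasDerivAt_aux (c b : ℝ) (n : ℕ) (x : ℝ) :
    HasDerivAt (fun y : ℝ => c * y^n * Real.exp (-b * y^2))
      (c * (n * x^(n-1)) * Real.exp (-b*x^2)
        + c * x^n * (Real.exp (-b*x^2) * (-b*(2*x^1)))) x := by
  have h1 : HasDerivAt (fun y : ℝ => c * y^n) (c * (n * x^(n-1))) x :=
    (hasDerivAt_pow n x).const_mul c
  have h2 : HasDerivAt (fun y : ℝ => Real.exp (-b*y^2))
      (Real.exp (-b*x^2) * (-b*(2*x^1))) x := by
    have h3 : HasDerivAt (fun y : ℝ => -b * y^2) (-b*(2*x^1)) x :=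
      (hasDerivAt_pow 2 x).const_mul (-b)
    exact h3.exp
  exact h1.mul h2

lemma log_gg (β : ℕ) (x : ℝ) (hx : x ≠ 0) {t : ℝ} (ht : 0 < t) :
    Real.log (ggDens β t x)
      = ((β:ℝ)+1/2) * Real.log t - Real.log (Real.Gamma ((β:ℝ)+1/2))
        + Real.log (x^(2*β)) - t * x^2 := by
  have hG : 0 < Real.Gamma ((β:ℝ)+1/2) := Real.Gamma_pos_of_pos (by positivity)
  have hxp : x^(2*β) ≠ 0 := pow_ne_zero _ hx
  have hA : t ^ ((β:ℝ)+1/2) / Real.Gamma ((β:ℝ)+1/2) ≠ 0 := by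
    have := Real.rpow_pos_of_pos ht ((β:ℝ)+1/2)
    positivity
  unfold ggDens
  rw [Real.log_mul (mul_ne_zero hA hxp) (Real.exp_ne_zero _), Real.log_mul hA hxp,
    Real.log_div (ne_of_gt (Real.rpow_pos_of_pos ht _)) hG.ne', Real.log_rpow ht,
    Real.log_exp]
  ring

lemma deriv_log_gg (β : ℕ) (θ : ℝ) (hθ : 0 < θ) (x : ℝ) (hx : x ≠ 0) :
    deriv (fun t => Real.log (ggDens β t x)) θ = (2*(β:ℝ)+1)/(2*θ) - x^2 := by
  have heq : (fun t => Real.log (ggDens β t x)) =ᶠ[nhds θ]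
      (fun t => ((β:ℝ)+1/2) * Real.log t - Real.log (Real.Gamma ((β:ℝ)+1/2))
        + Real.log (x^(2*β)) - t * x^2) := by
    filter_upwards [Ioi_mem_nhds hθ] with t ht using log_gg β x hx ht
  rw [heq.deriv_eq]
  have h : HasDerivAt (fun t : ℝ => ((β:ℝ)+1/2) * Real.log t
      - Real.log (Real.Gamma ((β:ℝ)+1/2)) + Real.log (x^(2*β)) - t * x^2)
      (((β:ℝ)+1/2) * θ⁻¹ - x^2) θ :=
    ((((Real.hasDerivAt_log hθ.ne').const_mul ((β:ℝ)+1/2)).sub_const _).add_const _).sub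
      (hasDerivAt_mul_const (x^2))
  rw [h.deriv]
  field_simp

lemma stein_lin (β : ℕ) (θ : ℝ) (hθ : 0 < θ) {x : ℝ} (hx : x ≠ 0) (a : ℝ) {f : ℝ → ℝ}
    (hf : f =ᶠ[nhds x] fun y => a * y) :
    stein1 (ggDens β θ) f x = a * (2*(β:ℝ)+1) - 2*θ*a*x^2 := by
  have hG : 0 < Real.Gamma ((β:ℝ)+1/2) := Real.Gamma_pos_of_pos (by positivity)
  have hC : θ ^ ((β:ℝ)+1/2) / Real.Gamma ((β:ℝ)+1/2) ≠ 0 := by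
    have := Real.rpow_pos_of_pos hθ ((β:ℝ)+1/2)
    positivity
  have heq : (fun y => ggDens β θ y * f y) =ᶠ[nhds x]
      (fun y => (θ ^ ((β:ℝ)+1/2) / Real.Gamma ((β:ℝ)+1/2) * a) * y^(2*β+1)
        * Real.exp (-θ*y^2)) := by
    filter_upwards [hf] with y hy
    rw [hy]; unfold ggDens; ring
  unfold stein1
  rw [heq.deriv_eq, (hasDerivAt_aux _ θ (2*β+1) x).deriv]
  unfold ggDens
  have hxp : x^(2*β) ≠ 0 := pow_ne_zero _ hx
  have hE : Real.exp (-θ*x^2) ≠ 0 := Real.exp_ne_zero _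
  have hsub : 2*β+1-1 = 2*β := by omega
  rw [hsub]
  push_cast
  field_simp
  ring

theorem stmt14 (β : ℕ) (θ : ℝ) (hθ : 0 < θ) :
    (∀ x : ℝ, x ≠ 0 →
        (deriv (fun t => Real.log (ggDens β t x)) θ
            = (2 * (β : ℝ) + 1) / (2 * θ) - x ^ 2)
        ∧ stein1 (ggDens β θ)
              (fun y => deriv (fun z => deriv (fun t => Real.log (ggDens β t z)) θ) y) x
            = -(4 * θ) * deriv (fun t => Real.log (ggDens β t x)) θ)
    ∧ (∀ x : ℝ, x ≠ 0 →
        stein1 (ggDens β θ)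
            (deriv (fun y => -y ^ 2 / (4 * θ) + (2 * (β : ℝ) + 1) / (8 * θ ^ 2))) x
          = - deriv (fun t => Real.log (ggDens β t x)) θ)
    ∧ ∫ x : ℝ, ggDens β θ x * (-x ^ 2 / (4 * θ) + (2 * (β : ℝ) + 1) / (8 * θ ^ 2)) = 0 := by
  refine ⟨fun x hx => ⟨deriv_log_gg β θ hθ x hx, ?_⟩, fun x hx => ?_, ?_⟩
  · -- part 1b
    have hf : (fun y => deriv (fun z => deriv (fun t => Real.log (ggDens β t z)) θ) y)
        =ᶠ[nhds x] fun y => (-2 : ℝ) * y := by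
      filter_upwards [eventually_ne_nhds hx] with z hz
      have hloc : (fun w => deriv (fun t => Real.log (ggDens β t w)) θ) =ᶠ[nhds z]
          (fun w => (2*(β:ℝ)+1)/(2*θ) - w^2) := by
        filter_upwards [eventually_ne_nhds hz] with w hw using deriv_log_gg β θ hθ w hw
      rw [hloc.deriv_eq]
      have h : HasDerivAt (fun w : ℝ => (2*(β:ℝ)+1)/(2*θ) - w^2)
          (-(2*z^1)) z := ((hasDerivAt_pow 2 z).const_sub _)
      rw [h.deriv]; ring
    rw [stein_lin β θ hθ hx (-2) hf, deriv_log_gg β θ hθ x hx]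
    field_simp
    ring
  · -- part 2
    have hf : (deriv (fun y => -y ^ 2 / (4 * θ) + (2 * (β : ℝ) + 1) / (8 * θ ^ 2)))
        =ᶠ[nhds x] fun y => (-1/(2*θ)) * y := by
      refine Filter.Eventually.of_forall (fun y => ?_)
      have h : HasDerivAt (fun y : ℝ => -y ^ 2 / (4 * θ) + (2 * (β : ℝ) + 1) / (8 * θ ^ 2))
          (-(2*y^1)/(4*θ)) y := (((hasDerivAt_pow 2 y).neg).div_const _).add_const _
      rw [h.deriv]
      field_simp
      ring
    rw [stein_lin β θ hθ hx (-1/(2*θ)) hf, deriv_log_gg β θ hθ x hx]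
    field_simp
    ring
  · -- part 3
    have hrw : (fun x : ℝ => ggDens β θ x * (-x ^ 2 / (4 * θ) + (2 * (β : ℝ) + 1) / (8 * θ ^ 2)))
        = fun x : ℝ => (-(θ ^ ((β:ℝ)+1/2) / Real.Gamma ((β:ℝ)+1/2) / (4*θ)))
              * (x^(2*(β+1)) * Real.exp (-θ*x^2))
            + (θ ^ ((β:ℝ)+1/2) / Real.Gamma ((β:ℝ)+1/2) * ((2*(β:ℝ)+1)/(8*θ^2)))
              * (x^(2*β) * Real.exp (-θ*x^2)) := by
      funext x; unfold ggDens; ring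
    rw [hrw, integral_add (((integrable_moment θ hθ (β+1))).const_mul _)
      ((integrable_moment θ hθ β).const_mul _), integral_const_mul, integral_const_mul,
      moment θ hθ (β+1), moment θ hθ β]
    have hG : 0 < Real.Gamma ((β:ℝ)+1/2) := Real.Gamma_pos_of_pos (by positivity)
    have hrec : Real.Gamma (((β+1:ℕ):ℝ)+1/2) = ((β:ℝ)+1/2) * Real.Gamma ((β:ℝ)+1/2) := by
      rw [show (((β+1:ℕ):ℝ)+1/2) = ((β:ℝ)+1/2)+1 by push_cast; ring,
        Real.Gamma_add_one (by positivity)]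
    have hpow : θ ^ (-(((β+1:ℕ):ℝ)+1/2)) = θ ^ (-((β:ℝ)+1/2)) * θ⁻¹ := by
      rw [show (-(((β+1:ℕ):ℝ)+1/2)) = (-((β:ℝ)+1/2)) + (-1) by push_cast; ring,
        Real.rpow_add hθ, Real.rpow_neg_one]
    have hcancel : θ ^ ((β:ℝ)+1/2) * θ ^ (-((β:ℝ)+1/2)) = 1 := by
      rw [← Real.rpow_add hθ, add_neg_cancel, Real.rpow_zero]
    rw [hrec, hpow]
    set G := Real.Gamma ((β:ℝ)+1/2) with hGdef
    set P := θ ^ ((β:ℝ)+1/2)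
    set Q := θ ^ (-((β:ℝ)+1/2))
    have h : -(P / G / (4*θ)) * (Q * θ⁻¹ * (((β:ℝ)+1/2) * G))
        + P / G * ((2*(β:ℝ)+1)/(8*θ^2)) * (Q * G)
        = (P * Q) * (-((((β:ℝ)+1/2))/(4*θ^2)) + (2*(β:ℝ)+1)/(8*θ^2)) := by
      field_simp
    rw [h, hcancel]
    ring
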